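/- Let ρ be a d×d complex positive semidefinite matrix with trace 1, let 0 < α < 1, and let Φ_1, …, Φ_N (N ≥ 3) be quantum channels, where Φ_s has Kraus operators K^s_1, …, K^s_n (d×d complex matrices with ∑_{i=1}^n (K^s_i)† K^s_i = I). Then for all permutations π_1, …, π_N of {1, …, n}: ∑_{s=1}^N I^α_ρ(Φ_s) ≥ (1/(N − 2)) · [ ∑_{1 ≤ s < t ≤ N} ∑_{i=1}^n I^α_ρ(K^s_{π_s(i)} + K^t_{π_t(i)}) − (1/(N − 1)²) · (∑_{1 ≤ s < t ≤ N} √(∑_{i=1}^n I^α_ρ(K^s_{π_s(i)} + K^t_{π_t(i)})))² ], where √ denotes the real square root. -/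

import Mathlib

open Matrix Finset
open scoped ComplexOrder

/-- `ρ^α` via the continuous functional calculus applied to `t ↦ t ^ α`. -/
noncomputable def mpow {d : ℕ} (ρ : Matrix (Fin d) (Fin d) ℂ) (α : ℝ) :
    Matrix (Fin d) (Fin d) ℂ :=
  cfc (fun t : ℝ => t ^ α) ρ

/-- The Wigner–Yanase–Dyson skew information
`I^α_ρ(K) = −(1/2) Tr([ρ^α, K†] [ρ^{1−α}, K])` of an arbitrary matrix `K`. -/
noncomputable def wyd {d : ℕ} (ρ : Matrix (Fin d) (Fin d) ℂ) (α : ℝ)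
    (K : Matrix (Fin d) (Fin d) ℂ) : ℝ :=
  (-(1 / 2 : ℂ) *
    ((mpow ρ α * Kᴴ - Kᴴ * mpow ρ α) * (mpow ρ (1 - α) * K - K * mpow ρ (1 - α))).trace).re

lemma pair_sum {M : Type*} [AddCommMonoid M] {N : ℕ} (f : Fin N → Fin N → M)
    (hf : ∀ s t, f s t = f t s) :
    ∑ s, ∑ t, f s t =
      (∑ p ∈ univ.filter (fun p : Fin N × Fin N => p.1 < p.2), f p.1 p.2) +
      (∑ p ∈ univ.filter (fun p : Fin N × Fin N => p.1 < p.2), f p.1 p.2) +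
      ∑ s, f s s := by
  have h0 : ∑ s, ∑ t, f s t = ∑ p : Fin N × Fin N, f p.1 p.2 := by
    rw [← Finset.univ_product_univ, Finset.sum_product]
  have hsplit := Finset.sum_filter_add_sum_filter_not (univ : Finset (Fin N × Fin N))
    (fun p => p.1 < p.2) (fun p => f p.1 p.2)
  have hnot : (univ : Finset (Fin N × Fin N)).filter (fun p => ¬ p.1 < p.2)
      = ((univ : Finset (Fin N × Fin N)).filter (fun p => p.2 < p.1)) ∪
        ((univ : Finset (Fin N × Fin N)).filter (fun p => p.1 = p.2)) := by
    ext p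
    simp only [Finset.mem_filter, Finset.mem_union, Finset.mem_univ, true_and, not_lt]
    constructor
    · intro h; rcases lt_or_eq_of_le h with h | h
      · exact Or.inl h
      · exact Or.inr h.symm
    · rintro (h | h)
      · exact le_of_lt h
      · exact le_of_eq h.symm
  have hdisj : Disjoint ((univ : Finset (Fin N × Fin N)).filter (fun p => p.2 < p.1))
      ((univ : Finset (Fin N × Fin N)).filter (fun p => p.1 = p.2)) := by
    rw [Finset.disjoint_left]
    intro p hp hq
    simp only [Finset.mem_filter] at hp hq
    exact absurd hq.2 (ne_of_gt hp.2)
  have hswap : ∑ p ∈ (univ : Finset (Fin N × Fin N)).filter (fun p => p.2 < p.1), f p.1 p.2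
      = ∑ p ∈ (univ : Finset (Fin N × Fin N)).filter (fun p => p.1 < p.2), f p.1 p.2 := by
    apply Finset.sum_nbij' (fun p => Prod.swap p) (fun p => Prod.swap p) <;>
      simp +contextual [hf _ _]
  have hdiag : ∑ p ∈ (univ : Finset (Fin N × Fin N)).filter (fun p => p.1 = p.2), f p.1 p.2
      = ∑ s, f s s := by
    apply Finset.sum_nbij' (fun p => p.1) (fun s => (s, s)) <;>
      simp +contextual [eq_comm]
  rw [h0, ← hsplit, hnot, Finset.sum_union hdisj, hswap, hdiag]
  abel

open scoped RealInnerProductSpace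

lemma key_ineq {E : Type*} [NormedAddCommGroup E] [InnerProductSpace ℝ E]
    {N : ℕ} (hN : 3 ≤ N) (v : Fin N → E) :
    ∑ s, ‖v s‖ ^ 2 ≥
      (1 / ((N : ℝ) - 2)) *
        ((∑ p ∈ univ.filter (fun p : Fin N × Fin N => p.1 < p.2), ‖v p.1 + v p.2‖ ^ 2) -
          (1 / ((N : ℝ) - 1) ^ 2) *
            (∑ p ∈ univ.filter (fun p : Fin N × Fin N => p.1 < p.2), ‖v p.1 + v p.2‖) ^ 2) := by
  have hN3 : (3 : ℝ) ≤ (N : ℝ) := by exact_mod_cast hN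
  set S := ∑ s, v s with hS
  set A := ∑ s, ‖v s‖ ^ 2 with hA
  set T1 := ∑ p ∈ univ.filter (fun p : Fin N × Fin N => p.1 < p.2), ‖v p.1 + v p.2‖ ^ 2 with hT1
  set T2 := ∑ p ∈ univ.filter (fun p : Fin N × Fin N => p.1 < p.2), ‖v p.1 + v p.2‖ with hT2def
  have hv : ∀ s t : Fin N, ‖v s + v t‖ ^ 2 = ‖v s‖ ^ 2 + ‖v t‖ ^ 2 + 2 * ⟪v s, v t⟫ :=
    fun s t => by rw [norm_add_sq_real]; ring
  have hSnorm : ∑ s, ∑ t, ⟪v s, v t⟫ = ‖S‖ ^ 2 := by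
    rw [← real_inner_self_eq_norm_sq, hS, sum_inner]
    exact Finset.sum_congr rfl fun s _ => (inner_sum _ _ _).symm
  -- identity 1
  have E1 := pair_sum (fun s t => ‖v s + v t‖ ^ 2)
    (fun s t => by show ‖v s + v t‖ ^ 2 = ‖v t + v s‖ ^ 2; rw [add_comm])
  have hT : ∑ s, ∑ t : Fin N, ‖v s + v t‖ ^ 2
      = 2 * (N : ℝ) * A + 2 * ‖S‖ ^ 2 := by
    have hrow : ∀ s, ∑ t : Fin N, ‖v s + v t‖ ^ 2
        = (N : ℝ) * ‖v s‖ ^ 2 + A + 2 * ∑ t, ⟪v s, v t⟫ := by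
      intro s
      simp_rw [hv, Finset.sum_add_distrib, Finset.sum_const, card_univ, Fintype.card_fin,
        nsmul_eq_mul, ← Finset.mul_sum, ← hA]
    rw [Finset.sum_congr rfl fun s _ => hrow s]
    rw [Finset.sum_add_distrib, Finset.sum_add_distrib, ← Finset.mul_sum, ← Finset.mul_sum,
      hSnorm, ← hA, Finset.sum_const, card_univ, Fintype.card_fin, nsmul_eq_mul]
    ring
  have hdiag : ∑ s : Fin N, ‖v s + v s‖ ^ 2 = 4 * A := by
    have h4 : ∀ s : Fin N, ‖v s + v s‖ ^ 2 = 4 * ‖v s‖ ^ 2 := fun s => by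
      rw [hv, real_inner_self_eq_norm_sq]; ring
    rw [Finset.sum_congr rfl fun s _ => h4 s, ← Finset.mul_sum, ← hA]
  have h1 : T1 = ((N : ℝ) - 2) * A + ‖S‖ ^ 2 := by
    rw [← hT1] at E1
    linarith [E1, hT, hdiag]
  -- identity 2
  have E2 := pair_sum (fun s t => v s + v t) (fun s t => add_comm _ _)
  have hT2 : ∑ s, ∑ t : Fin N, (v s + v t) = (2 * (N : ℝ)) • S := by
    have hrow : ∀ s, ∑ t : Fin N, (v s + v t) = (N : ℝ) • v s + S := by
      intro s
      rw [Finset.sum_add_distrib, Finset.sum_const, card_univ, Fintype.card_fin,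
        ← Nat.cast_smul_eq_nsmul ℝ, ← hS]
    rw [Finset.sum_congr rfl fun s _ => hrow s, Finset.sum_add_distrib, ← Finset.smul_sum, ← hS,
      Finset.sum_const, card_univ, Fintype.card_fin, ← Nat.cast_smul_eq_nsmul ℝ, ← add_smul]
    congr 1; ring
  have hdd : ∑ s : Fin N, (v s + v s) = S + S := by
    rw [Finset.sum_add_distrib, ← hS]
  have h2 : ∑ p ∈ univ.filter (fun p : Fin N × Fin N => p.1 < p.2), (v p.1 + v p.2)
      = ((N : ℝ) - 1) • S := by
    refine smul_right_injective E (two_ne_zero (α := ℝ)) ?_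
    have e := E2
    rw [hT2, hdd] at e
    show (2:ℝ) • _ = (2:ℝ) • _
    rw [two_smul, two_smul]
    have hPP : ∑ p ∈ univ.filter (fun p : Fin N × Fin N => p.1 < p.2), (v p.1 + v p.2) +
        ∑ p ∈ univ.filter (fun p : Fin N × Fin N => p.1 < p.2), (v p.1 + v p.2)
        = (2 * (N : ℝ)) • S - (S + S) := by rw [e]; abel
    rw [hPP]
    module
  have h3 : ((N : ℝ) - 1) * ‖S‖ ≤ T2 := by
    calc ((N : ℝ) - 1) * ‖S‖ = ‖((N : ℝ) - 1) • S‖ := by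
          rw [norm_smul, Real.norm_eq_abs, abs_of_nonneg (by linarith)]
      _ = ‖∑ p ∈ univ.filter (fun p : Fin N × Fin N => p.1 < p.2), (v p.1 + v p.2)‖ := by
          rw [h2]
      _ ≤ T2 := by rw [hT2def]; exact norm_sum_le _ _
  have hT2nn : (0:ℝ) ≤ T2 := by rw [hT2def]; exact Finset.sum_nonneg fun p _ => norm_nonneg _
  have hp : (0:ℝ) < ((N : ℝ) - 1) ^ 2 := by nlinarith
  have hsq : ((N : ℝ) - 1) ^ 2 * ‖S‖ ^ 2 ≤ T2 ^ 2 := by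
    have hmm := mul_self_le_mul_self
      (mul_nonneg (by linarith : (0:ℝ) ≤ (N : ℝ) - 1) (norm_nonneg S)) h3
    nlinarith [hmm]
  have h4 : ‖S‖ ^ 2 ≤ 1 / ((N : ℝ) - 1) ^ 2 * T2 ^ 2 := by
    rw [one_div, inv_mul_eq_div, le_div_iff₀ hp]; nlinarith
  have hN2 : (0:ℝ) < (N : ℝ) - 2 := by linarith
  rw [ge_iff_le]
  calc 1 / ((N : ℝ) - 2) * (T1 - 1 / ((N : ℝ) - 1) ^ 2 * T2 ^ 2)
      ≤ 1 / ((N : ℝ) - 2) * (((N : ℝ) - 2) * A) := by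
        apply mul_le_mul_of_nonneg_left _ (by positivity)
        linarith [h1, h4]
    _ = A := by field_simp

lemma wyd_eq_sum {d : ℕ} (ρ : Matrix (Fin d) (Fin d) ℂ) (hρ : ρ.PosSemidef)
    (α : ℝ) (K : Matrix (Fin d) (Fin d) ℂ) :
    wyd ρ α K = ∑ j, ∑ k,
      ((hρ.1.eigenvalues j ^ α - hρ.1.eigenvalues k ^ α) *
       (hρ.1.eigenvalues j ^ (1 - α) - hρ.1.eigenvalues k ^ (1 - α)) / 2) *
      Complex.normSq ((star (hρ.1.eigenvectorUnitary : Matrix (Fin d) (Fin d) ℂ) * K *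
        (hρ.1.eigenvectorUnitary : Matrix (Fin d) (Fin d) ℂ)) k j) := by
  set U : Matrix (Fin d) (Fin d) ℂ := (hρ.1.eigenvectorUnitary : Matrix (Fin d) (Fin d) ℂ) with hU
  set lam := hρ.1.eigenvalues with hlam
  set M : Matrix (Fin d) (Fin d) ℂ := star U * K * U with hM
  have hU1 : star U * U = 1 := Unitary.coe_star_mul_self _
  have hU2 : U * star U = 1 := Unitary.coe_mul_star_self _
  have hU1' : ∀ X : Matrix (Fin d) (Fin d) ℂ, star U * (U * X) = X := fun X => by
    rw [← mul_assoc, hU1, one_mul]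
  have hU2' : ∀ X : Matrix (Fin d) (Fin d) ℂ, U * (star U * X) = X := fun X => by
    rw [← mul_assoc, hU2, one_mul]
  have hm : ∀ β : ℝ, mpow ρ β = U * diagonal (fun i => ((lam i ^ β : ℝ) : ℂ)) * star U := by
    intro β
    rw [mpow, hρ.1.cfc_eq]
    rfl
  have hra : ∀ X : Matrix (Fin d) (Fin d) ℂ, X * (U * star U) = X := fun X => by
    rw [hU2, mul_one]
  have hrb : ∀ X : Matrix (Fin d) (Fin d) ℂ, X * (star U * U) = X := fun X => by
    rw [hU1, mul_one]
  have hK : K = U * M * star U := by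
    rw [hM]; simp only [mul_assoc, hU1', hU2', hra, hrb, hU1, hU2, mul_one]
  have hKH : Kᴴ = U * Mᴴ * star U := by
    rw [hK]
    simp only [star_eq_conjTranspose, conjTranspose_mul, conjTranspose_conjTranspose]
    rw [mul_assoc]
  set Da : Matrix (Fin d) (Fin d) ℂ := diagonal (fun i => ((lam i ^ α : ℝ) : ℂ)) with hDa
  set Db : Matrix (Fin d) (Fin d) ℂ := diagonal (fun i => ((lam i ^ (1 - α) : ℝ) : ℂ)) with hDb
  have hc1 : mpow ρ α * Kᴴ - Kᴴ * mpow ρ α = U * (Da * Mᴴ - Mᴴ * Da) * star U := by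
    rw [hm α, hKH, ← hDa]
    simp only [Matrix.mul_sub, Matrix.sub_mul, mul_assoc, hU1', hU2', hra, hrb]
  have hc2 : mpow ρ (1 - α) * K - K * mpow ρ (1 - α) = U * (Db * M - M * Db) * star U := by
    rw [hm (1 - α), hK, ← hDb]
    simp only [Matrix.mul_sub, Matrix.sub_mul, mul_assoc, hU1', hU2', hra, hrb]
  have htr : ((mpow ρ α * Kᴴ - Kᴴ * mpow ρ α) * (mpow ρ (1 - α) * K - K * mpow ρ (1 - α))).trace
      = ((Da * Mᴴ - Mᴴ * Da) * (Db * M - M * Db)).trace := by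
    rw [hc1, hc2]
    rw [show U * (Da * Mᴴ - Mᴴ * Da) * star U * (U * (Db * M - M * Db) * star U)
        = U * ((Da * Mᴴ - Mᴴ * Da) * (Db * M - M * Db)) * star U by
      simp only [mul_assoc, hU1', hU2', hra, hrb]]
    rw [Matrix.trace_mul_cycle, ← mul_assoc, hU1, one_mul]
  rw [wyd, htr]
  -- entrywise
  have hentry : ((Da * Mᴴ - Mᴴ * Da) * (Db * M - M * Db)).trace
      = ∑ j, ∑ k, (((lam j ^ α : ℝ) : ℂ) - ((lam k ^ α : ℝ) : ℂ)) *
          ((((lam k ^ (1 - α) : ℝ) : ℂ)) - (((lam j ^ (1 - α) : ℝ) : ℂ))) *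
          ((starRingEnd ℂ) (M k j) * M k j) := by
    rw [Matrix.trace]
    simp only [Matrix.diag_apply, Matrix.mul_apply, Matrix.sub_apply, Matrix.diagonal_mul,
      Matrix.mul_diagonal, Matrix.conjTranspose_apply, Matrix.diagonal_apply, ite_mul, mul_ite,
      zero_mul, mul_zero, Finset.sum_ite_eq, Finset.sum_ite_eq', Finset.mem_univ, if_true,
      RCLike.star_def, hDa, hDb, ← hM]
    congr 1; ext j; congr 1; ext k
    ring
  rw [hentry]
  have : (-(1/2 : ℂ)) * ∑ j, ∑ k, (((lam j ^ α : ℝ) : ℂ) - ((lam k ^ α : ℝ) : ℂ)) *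
          ((((lam k ^ (1 - α) : ℝ) : ℂ)) - (((lam j ^ (1 - α) : ℝ) : ℂ))) *
          ((starRingEnd ℂ) (M k j) * M k j)
      = ((∑ j, ∑ k, ((lam j ^ α - lam k ^ α) * (lam j ^ (1 - α) - lam k ^ (1 - α)) / 2) *
          Complex.normSq (M k j) : ℝ) : ℂ) := by
    rw [Finset.mul_sum]
    push_cast
    congr 1; ext j
    rw [Finset.mul_sum]
    congr 1; ext k
    have hmc : (starRingEnd ℂ) (M k j) * M k j = ((Complex.normSq (M k j) : ℝ) : ℂ) := by
      rw [mul_comm, Complex.mul_conj]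
    rw [hmc]
    push_cast
    ring
  rw [this, Complex.ofReal_re]

theorem channel_uncertainty_LB1 (d n N : ℕ) (hN : 3 ≤ N)
    (ρ : Matrix (Fin d) (Fin d) ℂ) (hρ : ρ.PosSemidef) (hTr : ρ.trace = 1)
    (α : ℝ) (hα0 : 0 < α) (hα1 : α < 1)
    (K : Fin N → Fin n → Matrix (Fin d) (Fin d) ℂ)
    (hK : ∀ s, ∑ i, (K s i)ᴴ * K s i = 1)
    (π : Fin N → Equiv.Perm (Fin n)) :
    ∑ s, ∑ i, wyd ρ α (K s i) ≥
      (1 / ((N : ℝ) - 2)) *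
        ((∑ p ∈ univ.filter (fun p : Fin N × Fin N => p.1 < p.2),
            ∑ i, wyd ρ α (K p.1 (π p.1 i) + K p.2 (π p.2 i))) -
          (1 / ((N : ℝ) - 1) ^ 2) *
            (∑ p ∈ univ.filter (fun p : Fin N × Fin N => p.1 < p.2),
              Real.sqrt (∑ i, wyd ρ α (K p.1 (π p.1 i) + K p.2 (π p.2 i)))) ^ 2) := by
  classical
  set U : Matrix (Fin d) (Fin d) ℂ := (hρ.1.eigenvectorUnitary : Matrix (Fin d) (Fin d) ℂ)
    with hU
  set lam := hρ.1.eigenvalues with hlam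
  set c : Fin d → Fin d → ℝ := fun j k =>
    (lam j ^ α - lam k ^ α) * (lam j ^ (1 - α) - lam k ^ (1 - α)) / 2 with hc
  have hcnn : ∀ j k, 0 ≤ c j k := by
    intro j k
    have hj : 0 ≤ lam j := hρ.eigenvalues_nonneg j
    have hk : 0 ≤ lam k := hρ.eigenvalues_nonneg k
    rcases le_total (lam j) (lam k) with h | h
    · have h1 : lam j ^ α ≤ lam k ^ α := Real.rpow_le_rpow hj h (le_of_lt hα0)
      have h2 : lam j ^ (1 - α) ≤ lam k ^ (1 - α) :=
        Real.rpow_le_rpow hj h (by linarith)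
      rw [hc]
      nlinarith
    · have h1 : lam k ^ α ≤ lam j ^ α := Real.rpow_le_rpow hk h (le_of_lt hα0)
      have h2 : lam k ^ (1 - α) ≤ lam j ^ (1 - α) :=
        Real.rpow_le_rpow hk h (by linarith)
      rw [hc]
      nlinarith
  set W : Matrix (Fin d) (Fin d) ℂ → (Fin d × Fin d) → ℂ := fun X jk =>
    (Real.sqrt (c jk.1 jk.2) : ℂ) * ((star U * X * U) jk.2 jk.1) with hW
  have hrep : ∀ X : Matrix (Fin d) (Fin d) ℂ,
      wyd ρ α X = ∑ jk : Fin d × Fin d, ‖W X jk‖ ^ 2 := by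
    intro X
    rw [wyd_eq_sum ρ hρ α X, Fintype.sum_prod_type]
    refine Finset.sum_congr rfl fun j _ => Finset.sum_congr rfl fun k _ => ?_
    rw [hW]
    rw [norm_mul, mul_pow, Complex.norm_real, Real.norm_eq_abs,
      abs_of_nonneg (Real.sqrt_nonneg _), Real.sq_sqrt (hcnn _ _),
      Complex.sq_norm]
  set v : Fin N → EuclideanSpace ℂ (Fin n × Fin d × Fin d) := fun s =>
    WithLp.toLp 2 (fun q : Fin n × Fin d × Fin d => W (K s (π s q.1)) q.2) with hv
  have hvnorm : ∀ w : EuclideanSpace ℂ (Fin n × Fin d × Fin d), ‖w‖ ^ 2 = ∑ q, ‖w q‖ ^ 2 := by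
    intro w
    rw [EuclideanSpace.norm_eq, Real.sq_sqrt (Finset.sum_nonneg fun q _ => sq_nonneg _)]
  have key1 : ∀ s, ∑ i, wyd ρ α (K s i) = ‖v s‖ ^ 2 := by
    intro s
    rw [hvnorm, Fintype.sum_prod_type, ← Equiv.sum_comp (π s) (fun i => wyd ρ α (K s i))]
    exact Finset.sum_congr rfl fun i _ => hrep _
  have key2 : ∀ p : Fin N × Fin N,
      ∑ i, wyd ρ α (K p.1 (π p.1 i) + K p.2 (π p.2 i)) = ‖v p.1 + v p.2‖ ^ 2 := by
    intro p
    rw [hvnorm, Fintype.sum_prod_type]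
    refine Finset.sum_congr rfl fun i _ => ?_
    rw [hrep]
    refine Finset.sum_congr rfl fun jk _ => ?_
    have hadd : W (K p.1 (π p.1 i) + K p.2 (π p.2 i)) jk
        = W (K p.1 (π p.1 i)) jk + W (K p.2 (π p.2 i)) jk := by
      rw [hW]
      simp only [Matrix.mul_add, Matrix.add_mul, Matrix.add_apply, mul_add]
    rw [hadd]
    rfl
  have habs := key_ineq hN v
  rw [Finset.sum_congr rfl fun s (_ : s ∈ univ) => key1 s,
    Finset.sum_congr rfl fun p (_ : p ∈ univ.filter fun p : Fin N × Fin N => p.1 < p.2) => key2 p,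
    Finset.sum_congr rfl fun p (_ : p ∈ univ.filter fun p : Fin N × Fin N => p.1 < p.2) =>
      (by rw [key2 p, Real.sqrt_sq (norm_nonneg _)] :
        Real.sqrt (∑ i, wyd ρ α (K p.1 (π p.1 i) + K p.2 (π p.2 i))) = ‖v p.1 + v p.2‖)]
  exact habs
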